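/- Fix v ∈ (0,1]. Define the v-discounted occupation mass matrix at level x ∈ ℤ by (L̃_v(x,∞))_{ij} := Σ_{k=0}^{∞} v^k ℙ(X_k = x, J_k = j | X_0 = 0, J_0 = i), and let L̃_v := L̃_v(0,∞), assumed to have finite entries. Then for every x ∈ ℤ, L̃_v(x,∞) = 𝔼(v^{τ^{x}}; J_{τ^{x}}) · L̃_v, where τ^{x} := inf{n ≥ 0 : X_n = x} and 𝔼(v^{τ^{x}}; J_{τ^{x}}) is the matrix with (i,j)-entry 𝔼(v^{τ^{x}} 1_{{τ^{x}<∞, J_{τ^{x}}=j}} | X_0 = 0, J_0 = i). -/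

import Mathlib

/- Framework: a discrete-time, discrete-space upward skip-free Markov additive chain (MAC)
on ℤ × {1,…,N}, with one-step transition matrices `A m` (for a level increment of `m`), is
encoded combinatorially: the law of the chain started at a state `s` is determined by the
weights of its finite trajectories, so every probability/expectation appearing in the paper
can be written as a (countable) sum of trajectory weights. -/

attribute [local instance] Classical.propDecidable

noncomputable section

namespace MACPaper

/-- state space: level × phase -/
abbrev S (N : ℕ) := ℤ × Fin N

variable {N : ℕ}

/-- one-step transition weight -/
def step (A : ℤ → Matrix (Fin N) (Fin N) ℝ) (s t : S N) : ℝ :=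
  A (t.1 - s.1) s.2 t.2

/-- probability weight of a finite trajectory, given by the list of successive states after `s` -/
def wt (A : ℤ → Matrix (Fin N) (Fin N) ℝ) : S N → List (S N) → ℝ
  | _, [] => 1
  | s, t :: r => step A s t * wt A t r

/-- the trajectory (as a function of time) determined by start `s` and subsequent states `l` -/
def pos (s : S N) (l : List (S N)) : ℕ → S N
  | 0 => s
  | n + 1 => l.getD n s

/-- expectation of a path functional over trajectories of length `n` started at `s` -/
def expec (A : ℤ → Matrix (Fin N) (Fin N) ℝ) (s : S N) (n : ℕ)
    (f : (ℕ → S N) → ℝ) : ℝ :=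
  ∑' l : { l : List (S N) // l.length = n }, f (pos s l.1) * wt A s l.1

/-- probability of an event depending on the trajectory up to time `n` -/
def prob (A : ℤ → Matrix (Fin N) (Fin N) ℝ) (s : S N) (n : ℕ)
    (E : (ℕ → S N) → Prop) : ℝ :=
  expec A s n fun p => if E p then 1 else 0

/-- F(z) = Σ_{m=-1}^{∞} z^m A_{-m}   (entrywise) -/
def Fmat (A : ℤ → Matrix (Fin N) (Fin N) ℝ) (z : ℝ) : Matrix (Fin N) (Fin N) ℝ :=
  Matrix.of fun i j => ∑' m : ℤ, z ^ m * A (-m) i j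

/-- P = Σ_m A_m  (entrywise) -/
def Pmat (A : ℤ → Matrix (Fin N) (Fin N) ℝ) : Matrix (Fin N) (Fin N) ℝ :=
  Matrix.of fun i j => ∑' m : ℤ, A m i j

/-- `τ^{x} = n`: the chain first hits level `x` at time `n` -/
def hitsAt (x : ℤ) (n : ℕ) (p : ℕ → S N) : Prop :=
  (p n).1 = x ∧ ∀ k < n, (p k).1 ≠ x

/-- matrix 𝔼(v^{τ^{x}}; τ^{x} < ∞, J_{τ^{x}}), chain started at (0,·) -/
def hitMat (A : ℤ → Matrix (Fin N) (Fin N) ℝ) (v : ℝ) (x : ℤ) :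
    Matrix (Fin N) (Fin N) ℝ :=
  Matrix.of fun i j =>
    ∑' n : ℕ, v ^ n * prob A ((0 : ℤ), i) n fun p => hitsAt x n p ∧ (p n).2 = j

/-- v-discounted occupation mass matrix at level `x` (infinite horizon), chain started at (0,·) -/
def occMat (A : ℤ → Matrix (Fin N) (Fin N) ℝ) (v : ℝ) (x : ℤ) :
    Matrix (Fin N) (Fin N) ℝ :=
  Matrix.of fun i j =>
    ∑' k : ℕ, v ^ k * prob A ((0 : ℤ), i) k fun p => p k = (x, j)

/-- v-discounted occupation mass at level 0 up to the first hitting time of level `n` -/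
def occUpToMat (A : ℤ → Matrix (Fin N) (Fin N) ℝ) (v : ℝ) (n : ℤ) :
    Matrix (Fin N) (Fin N) ℝ :=
  Matrix.of fun i j =>
    ∑' k : ℕ, v ^ k * prob A ((0 : ℤ), i) k fun p =>
      p k = ((0 : ℤ), j) ∧ ∀ m < k, (p m).1 ≠ n

/-- the fundamental matrix G = ℙ(J_{τ^{1}}) -/
def Gmat (A : ℤ → Matrix (Fin N) (Fin N) ℝ) : Matrix (Fin N) (Fin N) ℝ :=
  hitMat A 1 1

/-- L̃ : occupation mass matrix at level 0, infinite horizon -/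
def Ltilde (A : ℤ → Matrix (Fin N) (Fin N) ℝ) : Matrix (Fin N) (Fin N) ℝ :=
  occMat A 1 0

/-- the first scale matrix W(n) = (G^{-n} - ℙ(J_{τ^{-n}})) L̃ -/
def Wmat (A : ℤ → Matrix (Fin N) (Fin N) ℝ) (n : ℕ) : Matrix (Fin N) (Fin N) ℝ :=
  ((Gmat A)⁻¹ ^ n - hitMat A 1 (-(n : ℤ))) * Ltilde A

/-- v-discounted first scale matrix W_v(n) = (G_v^{-n} - 𝔼(v^{τ^{-n}}; J_{τ^{-n}})) L̃_v -/
def WmatV (A : ℤ → Matrix (Fin N) (Fin N) ℝ) (v : ℝ) (n : ℕ) :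
    Matrix (Fin N) (Fin N) ℝ :=
  ((hitMat A v 1)⁻¹ ^ n - hitMat A v (-(n : ℤ))) * occMat A v 0

/-- the second scale matrix Z(z,n) = z^{-n}[I + Σ_{k=0}^{n} z^k W(k) (I - F(z))] -/
def Zmat (A : ℤ → Matrix (Fin N) (Fin N) ℝ) (z : ℝ) (n : ℕ) :
    Matrix (Fin N) (Fin N) ℝ :=
  z⁻¹ ^ n • (1 + (∑ k ∈ Finset.range (n + 1), z ^ k • Wmat A k) * (1 - Fmat A z))

/-- matrix 𝔼(v^{τ_a^+}; τ_a^+ < τ_{-b}^-, J_{τ_a^+}) (upward exit from the strip [-b,a]) -/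
def upExitMat (A : ℤ → Matrix (Fin N) (Fin N) ℝ) (v : ℝ) (a b : ℤ) :
    Matrix (Fin N) (Fin N) ℝ :=
  Matrix.of fun i j =>
    ∑' n : ℕ, v ^ n * prob A ((0 : ℤ), i) n fun p =>
      a ≤ (p n).1 ∧ (∀ k < n, -b < (p k).1 ∧ (p k).1 < a) ∧ (p n).2 = j

/-- matrix 𝔼(z^{-X_{τ_{-b}^-}}; τ_{-b}^- < τ_a^+, J_{τ_{-b}^-}) (downward exit from [-b,a]) -/
def downExitMat (A : ℤ → Matrix (Fin N) (Fin N) ℝ) (z : ℝ) (a b : ℤ) :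
    Matrix (Fin N) (Fin N) ℝ :=
  Matrix.of fun i j =>
    ∑' n : ℕ, expec A ((0 : ℤ), i) n fun p =>
      if (p n).1 ≤ -b ∧ (∀ k < n, -b < (p k).1 ∧ (p k).1 < a) ∧ (p n).2 = j
      then z ^ (-(p n).1) else 0

/-- matrix 𝔼(z^{-X_{τ_{-b}^-}}; τ_{-b}^- < ∞, J_{τ_{-b}^-}) (one-sided downward exit) -/
def oneDownMat (A : ℤ → Matrix (Fin N) (Fin N) ℝ) (z : ℝ) (b : ℤ) :
    Matrix (Fin N) (Fin N) ℝ :=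
  Matrix.of fun i j =>
    ∑' n : ℕ, expec A ((0 : ℤ), i) n fun p =>
      if (p n).1 ≤ -b ∧ (∀ k < n, -b < (p k).1) ∧ (p n).2 = j
      then z ^ (-(p n).1) else 0

/-- two-sided Skorokhod reflection of the level path `X` in [-d,0], started at `x`:
the regulated process H -/
def reflH (d : ℕ) (x : ℤ) (X : ℕ → ℤ) : ℕ → ℤ
  | 0 => x
  | n + 1 =>
      reflH d x X n + (X (n + 1) - X n)
        - max (reflH d x X n + (X (n + 1) - X n)) 0
        + max (-(d : ℤ) - (reflH d x X n + (X (n + 1) - X n))) 0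

/-- upper regulator R^+ of the two-sided reflection in [-d,0] -/
def reflRp (d : ℕ) (x : ℤ) (X : ℕ → ℤ) : ℕ → ℤ
  | 0 => 0
  | n + 1 => reflRp d x X n + max (reflH d x X n + (X (n + 1) - X n)) 0

/-- lower regulator R^- of the two-sided reflection in [-d,0] -/
def reflRm (d : ℕ) (x : ℤ) (X : ℕ → ℤ) : ℕ → ℤ
  | 0 => 0
  | n + 1 => reflRm d x X n + max (-(d : ℤ) - (reflH d x X n + (X (n + 1) - X n))) 0

/-- lower regulator of the one-sided reflection at -b : R^{-b}_n = -b - min(-b, min_{k≤n} X_k) -/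
def lowReg (b : ℤ) (X : ℕ → ℤ) (n : ℕ) : ℤ :=
  -b - min (-b) ((Finset.range (n + 1)).inf' Finset.nonempty_range_add_one X)

section Lemmas

variable (A : ℤ → Matrix (Fin N) (Fin N) ℝ)

lemma step_nonneg (hA : ∀ m i j, 0 ≤ A m i j) (s t : S N) : 0 ≤ step A s t := hA _ _ _

lemma wt_nonneg (hA : ∀ m i j, 0 ≤ A m i j) : ∀ (s : S N) (l : List (S N)), 0 ≤ wt A s l
  | _, [] => zero_le_one
  | s, t :: r => mul_nonneg (step_nonneg A hA s t) (wt_nonneg hA t r)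

/-- shift equivalence on states -/
def shiftE (c : ℤ) : S N ≃ ℤ × Fin N :=
  (Equiv.prodCongr (Equiv.subRight c) (Equiv.refl (Fin N)))

lemma step_summable (hsum : ∀ i, Summable fun q : ℤ × Fin N => A q.1 i q.2) (s : S N) :
    Summable fun t : S N => step A s t := by
  have : (fun t : S N => step A s t) = (fun q : ℤ × Fin N => A q.1 s.2 q.2) ∘ (shiftE s.1) := by
    funext t; rfl
  rw [this]
  exact ((shiftE s.1).summable_iff.mpr (hsum s.2)).congr (fun t => rfl)

lemma step_tsum_le_one (hsub : ∀ i, ∑' q : ℤ × Fin N, A q.1 i q.2 ≤ 1) (s : S N) :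
    ∑' t : S N, step A s t ≤ 1 := by
  have : ∑' t : S N, step A s t = ∑' q : ℤ × Fin N, A q.1 s.2 q.2 := by
    rw [← (shiftE (N := N) s.1).tsum_eq (fun q : ℤ × Fin N => A q.1 s.2 q.2)]
    rfl
  rw [this]; exact hsub s.2

instance uniqueLen0 {α : Type*} : Unique {l : List α // l.length = 0} where
  default := ⟨[], rfl⟩
  uniq := fun ⟨l, h⟩ => by simp [List.length_eq_zero_iff] at h; simp [h]

/-- cons equivalence -/
def consEquiv {α : Type*} (n : ℕ) :
    {l : List α // l.length = n + 1} ≃ α × {l : List α // l.length = n} where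
  toFun := fun l => match l with
    | ⟨[], h⟩ => absurd h (by simp)
    | ⟨a :: r, h⟩ => (a, ⟨r, by simpa using h⟩)
  invFun p := ⟨p.1 :: p.2.1, by simp [p.2.2]⟩
  left_inv := fun ⟨l, h⟩ => by
    match l, h with
    | a :: r, h => rfl
  right_inv := fun ⟨a, ⟨l, h⟩⟩ => rfl

def gfun (s : S N) (n : ℕ) : S N × {l : List (S N) // l.length = n} → ℝ :=
  fun p => step A s p.1 * wt A p.1 p.2.1

lemma wt_summable_le (hA : ∀ m i j, 0 ≤ A m i j)
    (hsum : ∀ i, Summable fun q : ℤ × Fin N => A q.1 i q.2)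
    (hsub : ∀ i, ∑' q : ℤ × Fin N, A q.1 i q.2 ≤ 1) :
    ∀ (n : ℕ) (s : S N),
      Summable (fun l : {l : List (S N) // l.length = n} => wt A s l.1) ∧
      ∑' l : {l : List (S N) // l.length = n}, wt A s l.1 ≤ 1 := by
  intro n
  induction n with
  | zero =>
    intro s
    constructor
    · exact Summable.of_finite
    · rw [tsum_eq_single (default : {l : List (S N) // l.length = 0})
        (fun b hb => absurd (Subsingleton.elim b default) hb)]
      exact le_of_eq rfl
  | succ n ih =>
    intro s
    have hgdef : ∀ p : S N × {l : List (S N) // l.length = n},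
        gfun A s n p = step A s p.1 * wt A p.1 p.2.1 := fun _ => rfl
    have hg0 : 0 ≤ gfun A s n := fun p => mul_nonneg (step_nonneg A hA _ _) (wt_nonneg A hA _ _)
    have hslice : ∀ t, Summable fun r : {l : List (S N) // l.length = n} => gfun A s n (t, r) :=
      by
      intro t
      have h1 := (ih t).1.mul_left (step A s t)
      exact h1.congr fun r => rfl
    have hmargval : ∀ t : S N, ∑' r : {l : List (S N) // l.length = n}, gfun A s n (t, r)
        = step A s t * ∑' r : {l : List (S N) // l.length = n}, wt A t r.1 := by
      intro t
      exact tsum_mul_left (α := ℝ) (a := step A s t)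
        (f := fun r : {l : List (S N) // l.length = n} => wt A t r.1)
    have hmarg_le : ∀ t : S N, ∑' r : {l : List (S N) // l.length = n}, gfun A s n (t, r) ≤ step A s t := by
      intro t; rw [hmargval t]
      exact mul_le_of_le_one_right (step_nonneg A hA _ _) (ih t).2
    have hmarg : Summable fun t : S N => ∑' r : {l : List (S N) // l.length = n}, gfun A s n (t, r) := by
      refine Summable.of_nonneg_of_le (fun t => tsum_nonneg fun r => hg0 _) hmarg_le
        (step_summable A hsum s)
    have hgsum : Summable (gfun A s n) := (summable_prod_of_nonneg hg0).mpr ⟨hslice, hmarg⟩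
    have hcomp : (fun l : {l : List (S N) // l.length = n + 1} => wt A s l.1)
        = gfun A s n ∘ (consEquiv n) := by
      funext l
      match l with
      | ⟨a :: r, h⟩ => rfl
    constructor
    · rw [hcomp]; exact ((consEquiv n).summable_iff.mpr hgsum).congr (fun _ => rfl)
    · calc ∑' l : {l : List (S N) // l.length = n + 1}, wt A s l.1
          = ∑' p, gfun A s n p := by
            rw [hcomp]
            exact (consEquiv n).tsum_eq (gfun A s n)
        _ = ∑' t, ∑' r : {l : List (S N) // l.length = n}, gfun A s n (t, r) := Summable.tsum_prod' hgsum hslice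
        _ ≤ ∑' t : S N, step A s t := Summable.tsum_le_tsum hmarg_le hmarg (step_summable A hsum s)
        _ ≤ 1 := step_tsum_le_one A hsub s

end Lemmas

variable {N : ℕ} (A : ℤ → Matrix (Fin N) (Fin N) ℝ)


abbrev Len (N n : ℕ) := {l : List (S N) // l.length = n}

lemma pos_cons_succ (s t : S N) (r : List (S N)) (k : ℕ) (h : k ≤ r.length) :
    pos s (t :: r) (k + 1) = pos t r k := by
  cases k with
  | zero => rfl
  | succ m =>
    show (t :: r).getD (m + 1) s = r.getD m t
    have hm : m < r.length := h
    rw [List.getD_cons_succ, List.getD_eq_getElem _ _ hm, List.getD_eq_getElem _ _ hm]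

lemma wt_append (l₁ l₂ : List (S N)) : ∀ s : S N,
    wt A s (l₁ ++ l₂) = wt A s l₁ * wt A (pos s l₁ l₁.length) l₂ := by
  induction l₁ with
  | nil => intro s; simp [wt, pos]
  | cons t r ih =>
    intro s
    show step A s t * wt A t (r ++ l₂) = step A s t * wt A t r * wt A (pos s (t :: r) (r.length + 1)) l₂
    rw [pos_cons_succ s t r r.length le_rfl, ih t, mul_assoc]

lemma pos_append_le (s : S N) (l₁ l₂ : List (S N)) (k : ℕ) (h : k ≤ l₁.length) :
    pos s (l₁ ++ l₂) k = pos s l₁ k := by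
  cases k with
  | zero => rfl
  | succ m => exact List.getD_append _ _ _ _ h

lemma pos_append_add (s : S N) (l₁ l₂ : List (S N)) (k : ℕ) (hk : k ≤ l₂.length) :
    pos s (l₁ ++ l₂) (l₁.length + k) = pos (pos s l₁ l₁.length) l₂ k := by
  cases k with
  | zero =>
    rw [Nat.add_zero]
    show pos s (l₁ ++ l₂) l₁.length = pos s l₁ l₁.length
    exact pos_append_le s l₁ l₂ _ le_rfl
  | succ m =>
    show (l₁ ++ l₂).getD (l₁.length + m) s = l₂.getD m (pos s l₁ l₁.length)
    rw [List.getD_append_right _ _ _ _ (Nat.le_add_right _ _), Nat.add_sub_cancel_left]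
    have hm : m < l₂.length := hk
    rw [List.getD_eq_getElem _ _ hm, List.getD_eq_getElem _ _ hm]

def splitEquiv (N n k : ℕ) (h : n ≤ k) : Len N k ≃ Len N n × Len N (k - n) where
  toFun l := (⟨l.1.take n, by rw [List.length_take, l.2]; omega⟩,
              ⟨l.1.drop n, by rw [List.length_drop, l.2]⟩)
  invFun p := ⟨p.1.1 ++ p.2.1, by rw [List.length_append, p.1.2, p.2.2]; omega⟩
  left_inv l := Subtype.ext (List.take_append_drop n l.1)
  right_inv p := by
    ext : 1
    · exact Subtype.ext (List.take_left' p.1.2)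
    · exact Subtype.ext (List.drop_left' p.1.2)

/-- shift of a point -/
def shiftPt (c : ℤ) (t : S N) : S N := (t.1 + c, t.2)

lemma step_shift (c : ℤ) (s t : S N) : step A (shiftPt c s) (shiftPt c t) = step A s t := by
  unfold step shiftPt
  norm_num

lemma wt_shift (c : ℤ) (l : List (S N)) : ∀ s : S N,
    wt A (shiftPt c s) (l.map (shiftPt c)) = wt A s l := by
  induction l with
  | nil => intro s; rfl
  | cons t r ih =>
    intro s
    show step A (shiftPt c s) (shiftPt c t) * wt A (shiftPt c t) (r.map (shiftPt c))
        = step A s t * wt A t r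
    rw [step_shift, ih t]

lemma pos_shift (c : ℤ) (s : S N) (l : List (S N)) (k : ℕ) :
    pos (shiftPt c s) (l.map (shiftPt c)) k = shiftPt c (pos s l k) := by
  cases k with
  | zero => rfl
  | succ m =>
    show (l.map (shiftPt c)).getD m (shiftPt c s) = shiftPt c (l.getD m s)
    exact List.getD_map _ _ (f := shiftPt c)

def shiftLE (c : ℤ) (N n : ℕ) : Len N n ≃ Len N n where
  toFun l := ⟨l.1.map (shiftPt c), by rw [List.length_map]; exact l.2⟩
  invFun l := ⟨l.1.map (shiftPt (-c)), by rw [List.length_map]; exact l.2⟩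
  left_inv l := Subtype.ext (by
    show (l.1.map (shiftPt c)).map (shiftPt (-c)) = l.1
    rw [List.map_map]
    have : shiftPt (N := N) (-c) ∘ shiftPt c = id := by
      funext t; unfold shiftPt; simp
    rw [this, List.map_id])
  right_inv l := Subtype.ext (by
    show (l.1.map (shiftPt (-c))).map (shiftPt c) = l.1
    rw [List.map_map]
    have : shiftPt (N := N) c ∘ shiftPt (-c) = id := by
      funext t; unfold shiftPt; simp
    rw [this, List.map_id])

lemma expec_shift (c : ℤ) (s : S N) (n : ℕ) (f : (ℕ → S N) → ℝ) :
    expec A (shiftPt c s) n f = expec A s n (fun p => f (fun k => shiftPt c (p k))) := by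
  unfold expec
  rw [← (shiftLE c N n).tsum_eq]
  apply tsum_congr
  intro l
  show f (pos (shiftPt c s) (l.1.map (shiftPt c))) * wt A (shiftPt c s) (l.1.map (shiftPt c)) = _
  rw [wt_shift]
  congr 1
  congr 1
  funext k
  exact pos_shift c s l.1 k

lemma prob_shift (c : ℤ) (s : S N) (n : ℕ) (E : (ℕ → S N) → Prop) :
    prob A (shiftPt c s) n E = prob A s n (fun p => E (fun k => shiftPt c (p k))) := by
  unfold prob
  exact expec_shift A c s n _



/-- indicator -/
def ind (P : Prop) : ℝ := if P then 1 else 0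

lemma ind_nonneg (P : Prop) : 0 ≤ ind P := by unfold ind; split <;> norm_num

lemma ind_le_one (P : Prop) : ind P ≤ 1 := by unfold ind; split <;> norm_num

lemma ind_true {P : Prop} (h : P) : ind P = 1 := by unfold ind; rw [if_pos h]

lemma ind_false {P : Prop} (h : ¬ P) : ind P = 0 := by unfold ind; rw [if_neg h]

lemma ind_mono {P Q : Prop} (h : P → Q) : ind P ≤ ind Q := by
  by_cases hP : P
  · rw [ind_true hP, ind_true (h hP)]
  · rw [ind_false hP]; exact ind_nonneg Q

lemma ind_and (P Q : Prop) : ind (P ∧ Q) = ind P * ind Q := by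
  by_cases hP : P
  · by_cases hQ : Q
    · rw [ind_true ⟨hP, hQ⟩, ind_true hP, ind_true hQ]; norm_num
    · rw [ind_false (fun hc => hQ hc.2), ind_false hQ]; ring
  · rw [ind_false (fun hc => hP hc.1), ind_false hP]; ring

lemma ind_congr {P Q : Prop} (h : P ↔ Q) : ind P = ind Q := by
  by_cases hP : P
  · rw [ind_true hP, ind_true (h.mp hP)]
  · rw [ind_false hP, ind_false (fun hc => hP (h.mpr hc))]

section ProbBasics

variable {N : ℕ} (A : ℤ → Matrix (Fin N) (Fin N) ℝ)
  (hA : ∀ m i j, 0 ≤ A m i j)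
  (hsum : ∀ i, Summable fun q : ℤ × Fin N => A q.1 i q.2)
  (hsub : ∀ i, ∑' q : ℤ × Fin N, A q.1 i q.2 ≤ 1)

lemma prob_eq (s : S N) (n : ℕ) (E : (ℕ → S N) → Prop) :
    prob A s n E = ∑' l : Len N n, ind (E (pos s l.1)) * wt A s l.1 := rfl

include hA hsum hsub

lemma summable_ind (s : S N) (n : ℕ) (E : (ℕ → S N) → Prop) :
    Summable fun l : Len N n => ind (E (pos s l.1)) * wt A s l.1 := by
  refine Summable.of_nonneg_of_le
    (fun l => mul_nonneg (ind_nonneg _) (wt_nonneg A hA _ _))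
    (fun l => mul_le_of_le_one_left (wt_nonneg A hA _ _) (ind_le_one _))
    (wt_summable_le A hA hsum hsub n s).1

omit hA hsum hsub

lemma prob_nonneg (s : S N) (n : ℕ) (E : (ℕ → S N) → Prop) (hA : ∀ m i j, 0 ≤ A m i j) :
    0 ≤ prob A s n E := by
  rw [prob_eq]
  exact tsum_nonneg fun l => mul_nonneg (ind_nonneg _) (wt_nonneg A hA _ _)

include hA hsum hsub

lemma prob_le_one (s : S N) (n : ℕ) (E : (ℕ → S N) → Prop) : prob A s n E ≤ 1 := by
  rw [prob_eq]
  refine le_trans (Summable.tsum_le_tsum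
    (fun l => mul_le_of_le_one_left (wt_nonneg A hA _ _) (ind_le_one _))
    (summable_ind A hA hsum hsub s n E)
    (wt_summable_le A hA hsum hsub n s).1) (wt_summable_le A hA hsum hsub n s).2

lemma prob_mono (s : S N) (n : ℕ) (E F : (ℕ → S N) → Prop) (h : ∀ p, E p → F p) :
    prob A s n E ≤ prob A s n F := by
  rw [prob_eq, prob_eq]
  exact Summable.tsum_le_tsum
    (fun l => mul_le_mul_of_nonneg_right (ind_mono (h _)) (wt_nonneg A hA _ _))
    (summable_ind A hA hsum hsub s n E) (summable_ind A hA hsum hsub s n F)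

omit hA hsum hsub

lemma prob_zero (s : S N) (E : (ℕ → S N) → Prop) :
    prob A s 0 E = ind (E (pos s [])) := by
  rw [prob_eq]
  rw [tsum_eq_single (default : Len N 0) (fun b hb => absurd (Subsingleton.elim b default) hb)]
  show ind (E (pos s [])) * wt A s [] = _
  show ind (E (pos s [])) * 1 = _
  rw [mul_one]

lemma prob_congr (s : S N) (n : ℕ) (E F : (ℕ → S N) → Prop) (h : ∀ p, E p ↔ F p) :
    prob A s n E = prob A s n F := by
  rw [prob_eq, prob_eq]
  exact tsum_congr fun l => by rw [ind_congr (h _)]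

include hA hsum hsub

/-- splitting a trajectory at the first-hitting time -/
lemma prob_split_first (x : ℤ) (j : Fin N) (k n : ℕ) (hn : n ≤ k) (s : S N) :
    prob A s k (fun p => p k = (x, j) ∧ hitsAt x n p)
      = ∑ m : Fin N, prob A s n (fun p => hitsAt x n p ∧ (p n).2 = m)
          * prob A ((x, m) : S N) (k - n) (fun p => p (k - n) = (x, j)) := by
  classical
  have key : ∀ q : Len N n × Len N (k - n),
      ind (pos s (q.1.1 ++ q.2.1) k = (x, j) ∧ hitsAt x n (pos s (q.1.1 ++ q.2.1)))
        * wt A s (q.1.1 ++ q.2.1)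
      = (ind (hitsAt x n (pos s q.1.1)) * wt A s q.1.1)
        * (ind (pos (pos s q.1.1 n) q.2.1 (k - n) = (x, j)) * wt A (pos s q.1.1 n) q.2.1) := by
    rintro ⟨⟨L1, hL1⟩, ⟨L2, hL2⟩⟩
    dsimp only
    have hwt : wt A s (L1 ++ L2) = wt A s L1 * wt A (pos s L1 n) L2 := by
      rw [wt_append, hL1]
    have hposk : pos s (L1 ++ L2) k = pos (pos s L1 n) L2 (k - n) := by
      have h2 := pos_append_add s L1 L2 (k - n) (le_of_eq hL2.symm)
      rw [hL1] at h2
      rw [show n + (k - n) = k by omega] at h2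
      exact h2
    have hhits : hitsAt x n (pos s (L1 ++ L2)) ↔ hitsAt x n (pos s L1) := by
      unfold hitsAt
      constructor
      · rintro ⟨h1, h2⟩
        refine ⟨by rw [← pos_append_le s L1 L2 n (le_of_eq hL1.symm)]; exact h1, fun r hr => ?_⟩
        rw [← pos_append_le s L1 L2 r (by omega)]; exact h2 r hr
      · rintro ⟨h1, h2⟩
        refine ⟨by rw [pos_append_le s L1 L2 n (le_of_eq hL1.symm)]; exact h1, fun r hr => ?_⟩
        rw [pos_append_le s L1 L2 r (by omega)]; exact h2 r hr
    rw [hwt, ind_congr (and_congr (by rw [hposk]) hhits), and_comm, ind_and]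
    ring
  have hLHS : prob A s k (fun p => p k = (x, j) ∧ hitsAt x n p)
      = ∑' q : Len N n × Len N (k - n),
          (ind (hitsAt x n (pos s q.1.1)) * wt A s q.1.1)
          * (ind (pos (pos s q.1.1 n) q.2.1 (k - n) = (x, j)) * wt A (pos s q.1.1 n) q.2.1) := by
    rw [prob_eq, ← Equiv.tsum_eq (splitEquiv N n k hn).symm]
    exact tsum_congr fun q => key q
  rw [hLHS]
  have hF0 : ∀ q : Len N n × Len N (k - n),
      0 ≤ (ind (hitsAt x n (pos s q.1.1)) * wt A s q.1.1)
          * (ind (pos (pos s q.1.1 n) q.2.1 (k - n) = (x, j)) * wt A (pos s q.1.1 n) q.2.1) :=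
    fun q => mul_nonneg (mul_nonneg (ind_nonneg _) (wt_nonneg A hA _ _))
      (mul_nonneg (ind_nonneg _) (wt_nonneg A hA _ _))
  have hslice : ∀ l1 : Len N n, Summable fun l2 : Len N (k - n) =>
      (ind (hitsAt x n (pos s l1.1)) * wt A s l1.1)
      * (ind (pos (pos s l1.1 n) l2.1 (k - n) = (x, j)) * wt A (pos s l1.1 n) l2.1) := by
    intro l1
    have h1 := (summable_ind A hA hsum hsub (pos s l1.1 n) (k - n)
      (fun p => p (k - n) = (x, j))).mul_left
      (ind (hitsAt x n (pos s l1.1)) * wt A s l1.1)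
    exact h1.congr fun l2 => rfl
  have hinner : ∀ l1 : Len N n,
      (∑' l2 : Len N (k - n),
        (ind (hitsAt x n (pos s l1.1)) * wt A s l1.1)
        * (ind (pos (pos s l1.1 n) l2.1 (k - n) = (x, j)) * wt A (pos s l1.1 n) l2.1))
      = (ind (hitsAt x n (pos s l1.1)) * wt A s l1.1)
        * prob A (pos s l1.1 n) (k - n) (fun p => p (k - n) = (x, j)) := by
    intro l1
    rw [prob_eq]
    exact tsum_mul_left (α := ℝ)
      (a := ind (hitsAt x n (pos s l1.1)) * wt A s l1.1)
      (f := fun l2 : Len N (k - n) =>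
        ind (pos (pos s l1.1 n) l2.1 (k - n) = (x, j)) * wt A (pos s l1.1 n) l2.1)
  have hmarg : Summable fun l1 : Len N n =>
      ∑' l2 : Len N (k - n),
        (ind (hitsAt x n (pos s l1.1)) * wt A s l1.1)
        * (ind (pos (pos s l1.1 n) l2.1 (k - n) = (x, j)) * wt A (pos s l1.1 n) l2.1) := by
    refine Summable.of_nonneg_of_le (fun l1 => tsum_nonneg fun l2 => hF0 (l1, l2))
      (fun l1 => ?_) (wt_summable_le A hA hsum hsub n s).1
    rw [hinner l1]
    calc (ind (hitsAt x n (pos s l1.1)) * wt A s l1.1)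
          * prob A (pos s l1.1 n) (k - n) (fun p => p (k - n) = (x, j))
        ≤ (ind (hitsAt x n (pos s l1.1)) * wt A s l1.1) * 1 :=
          mul_le_mul_of_nonneg_left (prob_le_one A hA hsum hsub _ _ _)
            (mul_nonneg (ind_nonneg _) (wt_nonneg A hA _ _))
      _ ≤ wt A s l1.1 := by
          rw [mul_one]
          exact mul_le_of_le_one_left (wt_nonneg A hA _ _) (ind_le_one _)
  have hFsum : Summable fun q : Len N n × Len N (k - n) =>
      (ind (hitsAt x n (pos s q.1.1)) * wt A s q.1.1)
      * (ind (pos (pos s q.1.1 n) q.2.1 (k - n) = (x, j)) * wt A (pos s q.1.1 n) q.2.1) :=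
    (summable_prod_of_nonneg hF0).mpr ⟨hslice, hmarg⟩
  rw [Summable.tsum_prod' hFsum hslice]
  have hpoint : ∀ l1 : Len N n,
      (ind (hitsAt x n (pos s l1.1)) * wt A s l1.1)
        * prob A (pos s l1.1 n) (k - n) (fun p => p (k - n) = (x, j))
      = ∑ m : Fin N,
          (ind (hitsAt x n (pos s l1.1) ∧ (pos s l1.1 n).2 = m) * wt A s l1.1)
          * prob A ((x, m) : S N) (k - n) (fun p => p (k - n) = (x, j)) := by
    intro l1
    by_cases hH : hitsAt x n (pos s l1.1)
    · have hx : (pos s l1.1 n).1 = x := hH.1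
      rw [Finset.sum_eq_single (pos s l1.1 n).2]
      · rw [ind_true hH, ind_true ⟨hH, rfl⟩,
          show ((x, (pos s l1.1 n).2) : S N) = pos s l1.1 n from Prod.ext_iff.mpr ⟨hx.symm, rfl⟩]
      · intro m _ hm
        rw [ind_false (fun hc => hm hc.2.symm)]
        ring
      · intro hmem; exact absurd (Finset.mem_univ _) hmem
    · rw [ind_false hH]
      rw [Finset.sum_congr rfl (fun m _ => by rw [ind_false (fun hc => hH hc.1)])]
      simp
  calc ∑' l1 : Len N n, ∑' l2 : Len N (k - n),
        (ind (hitsAt x n (pos s l1.1)) * wt A s l1.1)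
        * (ind (pos (pos s l1.1 n) l2.1 (k - n) = (x, j)) * wt A (pos s l1.1 n) l2.1)
      = ∑' l1 : Len N n, ∑ m : Fin N,
          (ind (hitsAt x n (pos s l1.1) ∧ (pos s l1.1 n).2 = m) * wt A s l1.1)
          * prob A ((x, m) : S N) (k - n) (fun p => p (k - n) = (x, j)) := by
        refine tsum_congr fun l1 => ?_
        rw [hinner l1, hpoint l1]
    _ = ∑ m : Fin N, ∑' l1 : Len N n,
          (ind (hitsAt x n (pos s l1.1) ∧ (pos s l1.1 n).2 = m) * wt A s l1.1)
          * prob A ((x, m) : S N) (k - n) (fun p => p (k - n) = (x, j)) := by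
        refine Summable.tsum_finsetSum fun m _ => ?_
        have h1 := (summable_ind A hA hsum hsub s n
          (fun p => hitsAt x n p ∧ (p n).2 = m)).mul_right
          (prob A ((x, m) : S N) (k - n) (fun p => p (k - n) = (x, j)))
        exact h1.congr fun l1 => rfl
    _ = ∑ m : Fin N, prob A s n (fun p => hitsAt x n p ∧ (p n).2 = m)
          * prob A ((x, m) : S N) (k - n) (fun p => p (k - n) = (x, j)) := by
        refine Finset.sum_congr rfl fun m _ => ?_
        rw [prob_eq]
        exact tsum_mul_right (α := ℝ)

end ProbBasics


section Decomp

variable {N : ℕ} (A : ℤ → Matrix (Fin N) (Fin N) ℝ)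
  (hA : ∀ m i j, 0 ≤ A m i j)
  (hsum : ∀ i, Summable fun q : ℤ × Fin N => A q.1 i q.2)
  (hsub : ∀ i, ∑' q : ℤ × Fin N, A q.1 i q.2 ≤ 1)

include hA hsum hsub

/-- decomposition over the first hitting time -/
lemma prob_decomp (s : S N) (x : ℤ) (j : Fin N) (k : ℕ) :
    prob A s k (fun p => p k = (x, j))
      = ∑ n ∈ Finset.range (k + 1), prob A s k (fun p => p k = (x, j) ∧ hitsAt x n p) := by
  classical
  have hpt : ∀ p : ℕ → S N,
      ind (p k = (x, j)) = ∑ n ∈ Finset.range (k + 1), ind (p k = (x, j) ∧ hitsAt x n p) := by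
    intro p
    by_cases hE : p k = (x, j)
    · have hex : ∃ n, (p n).1 = x := ⟨k, by rw [hE]⟩
      have hfs : (p (Nat.find hex)).1 = x := Nat.find_spec hex
      have hmin : ∀ r < Nat.find hex, (p r).1 ≠ x := fun r hr => Nat.find_min hex hr
      have hn0le : Nat.find hex ≤ k := Nat.find_le (by rw [hE])
      rw [Finset.sum_eq_single (Nat.find hex)]
      · rw [ind_true hE, ind_true ⟨hE, hfs, hmin⟩]
      · intro n hn hne
        refine ind_false ?_
        rintro ⟨-, hx', hmin'⟩
        rcases lt_or_gt_of_ne hne with h | h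
        · exact hmin n h hx'
        · exact hmin' (Nat.find hex) h hfs
      · intro hnot; exact absurd (Finset.mem_range.mpr (by omega)) hnot
    · rw [ind_false hE,
        Finset.sum_congr rfl (fun n _ => ind_false (fun hc => hE hc.1))]
      simp
  rw [prob_eq]
  calc ∑' l : Len N k, ind (pos s l.1 k = (x, j)) * wt A s l.1
      = ∑' l : Len N k, ∑ n ∈ Finset.range (k + 1),
          ind (pos s l.1 k = (x, j) ∧ hitsAt x n (pos s l.1)) * wt A s l.1 := by
        refine tsum_congr fun l => ?_
        rw [hpt (pos s l.1), Finset.sum_mul]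
    _ = ∑ n ∈ Finset.range (k + 1), ∑' l : Len N k,
          ind (pos s l.1 k = (x, j) ∧ hitsAt x n (pos s l.1)) * wt A s l.1 := by
        refine Summable.tsum_finsetSum fun n _ => ?_
        exact summable_ind A hA hsum hsub s k (fun p => p k = (x, j) ∧ hitsAt x n p)
    _ = ∑ n ∈ Finset.range (k + 1), prob A s k (fun p => p k = (x, j) ∧ hitsAt x n p) :=
        Finset.sum_congr rfl fun n _ =>
          (prob_eq A s k (fun p => p k = (x, j) ∧ hitsAt x n p)).symm

/-- marginalizing the last step -/
lemma prob_succ_le (s : S N) (K : ℕ) (E : (ℕ → S N) → Prop)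
    (hE : ∀ p q : ℕ → S N, (∀ m, m ≤ K → p m = q m) → E p → E q) :
    prob A s (K + 1) E ≤ prob A s K E := by
  classical
  have key : ∀ q : Len N K × Len N (K + 1 - K),
      ind (E (pos s (q.1.1 ++ q.2.1))) * wt A s (q.1.1 ++ q.2.1)
      = (ind (E (pos s q.1.1)) * wt A s q.1.1) * wt A (pos s q.1.1 K) q.2.1 := by
    rintro ⟨⟨L1, hL1⟩, ⟨L2, hL2⟩⟩
    dsimp only
    have hwt : wt A s (L1 ++ L2) = wt A s L1 * wt A (pos s L1 K) L2 := by
      rw [wt_append, hL1]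
    have hiff : E (pos s (L1 ++ L2)) ↔ E (pos s L1) := by
      constructor
      · refine hE _ _ fun m hm => ?_
        exact pos_append_le s L1 L2 m (by omega)
      · refine hE _ _ fun m hm => ?_
        exact (pos_append_le s L1 L2 m (by omega)).symm
    rw [hwt, ind_congr hiff]
    ring
  have hF0 : ∀ q : Len N K × Len N (K + 1 - K),
      0 ≤ (ind (E (pos s q.1.1)) * wt A s q.1.1) * wt A (pos s q.1.1 K) q.2.1 :=
    fun q => mul_nonneg (mul_nonneg (ind_nonneg _) (wt_nonneg A hA _ _)) (wt_nonneg A hA _ _)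
  have hslice : ∀ l1 : Len N K, Summable fun l2 : Len N (K + 1 - K) =>
      (ind (E (pos s l1.1)) * wt A s l1.1) * wt A (pos s l1.1 K) l2.1 := by
    intro l1
    have h1 := (wt_summable_le A hA hsum hsub (K + 1 - K) (pos s l1.1 K)).1.mul_left
      (ind (E (pos s l1.1)) * wt A s l1.1)
    exact h1.congr fun l2 => rfl
  have hinner : ∀ l1 : Len N K,
      (∑' l2 : Len N (K + 1 - K), (ind (E (pos s l1.1)) * wt A s l1.1)
          * wt A (pos s l1.1 K) l2.1)
      = (ind (E (pos s l1.1)) * wt A s l1.1)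
          * ∑' l2 : Len N (K + 1 - K), wt A (pos s l1.1 K) l2.1 :=
    fun l1 => tsum_mul_left (α := ℝ)
  have hinner_le : ∀ l1 : Len N K,
      (∑' l2 : Len N (K + 1 - K), (ind (E (pos s l1.1)) * wt A s l1.1)
          * wt A (pos s l1.1 K) l2.1)
      ≤ ind (E (pos s l1.1)) * wt A s l1.1 := by
    intro l1
    rw [hinner l1]
    exact mul_le_of_le_one_right (mul_nonneg (ind_nonneg _) (wt_nonneg A hA _ _))
      (wt_summable_le A hA hsum hsub (K + 1 - K) (pos s l1.1 K)).2
  have hmarg : Summable fun l1 : Len N K =>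
      ∑' l2 : Len N (K + 1 - K), (ind (E (pos s l1.1)) * wt A s l1.1)
        * wt A (pos s l1.1 K) l2.1 := by
    refine Summable.of_nonneg_of_le (fun l1 => tsum_nonneg fun l2 => hF0 (l1, l2))
      (fun l1 => le_trans (hinner_le l1) ?_) (wt_summable_le A hA hsum hsub K s).1
    exact mul_le_of_le_one_left (wt_nonneg A hA _ _) (ind_le_one _)
  have hFsum : Summable fun q : Len N K × Len N (K + 1 - K) =>
      (ind (E (pos s q.1.1)) * wt A s q.1.1) * wt A (pos s q.1.1 K) q.2.1 :=
    (summable_prod_of_nonneg hF0).mpr ⟨hslice, hmarg⟩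
  calc prob A s (K + 1) E
      = ∑' q : Len N K × Len N (K + 1 - K),
          (ind (E (pos s q.1.1)) * wt A s q.1.1) * wt A (pos s q.1.1 K) q.2.1 := by
        rw [prob_eq A s (K + 1) E, ← Equiv.tsum_eq (splitEquiv N K (K + 1) (by omega)).symm]
        exact tsum_congr fun q => key q
    _ = ∑' l1 : Len N K, ∑' l2 : Len N (K + 1 - K),
          (ind (E (pos s l1.1)) * wt A s l1.1) * wt A (pos s l1.1 K) l2.1 :=
        Summable.tsum_prod' hFsum hslice
    _ ≤ ∑' l1 : Len N K, ind (E (pos s l1.1)) * wt A s l1.1 :=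
        Summable.tsum_le_tsum hinner_le hmarg (summable_ind A hA hsum hsub s K E)
    _ = prob A s K E := (prob_eq A s K E).symm

/-- total first-passage mass is at most one -/
lemma hit_partial_le_one (x : ℤ) (s : S N) : ∀ K : ℕ,
    (∑ n ∈ Finset.range (K + 1), prob A s n (fun p => hitsAt x n p))
      + prob A s K (fun p => ∀ m, m ≤ K → (p m).1 ≠ x) ≤ 1 := by
  have hposnil : ∀ m : ℕ, pos s ([] : List (S N)) m = s := by
    intro m; cases m with
    | zero => rfl
    | succ r => show ([] : List (S N)).getD r s = s; rfl
  intro K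
  induction K with
  | zero =>
    rw [Finset.sum_range_one, prob_zero, prob_zero]
    by_cases hx : s.1 = x
    · rw [ind_true ⟨by rw [hposnil 0]; exact hx, fun r hr => absurd hr (Nat.not_lt_zero r)⟩,
        ind_false (fun hc => (hc 0 le_rfl) (by rw [hposnil 0]; exact hx))]
      norm_num
    · rw [ind_false (fun hc => hx (by rw [← hposnil 0]; exact hc.1)),
        ind_true (fun m _ => by rw [hposnil m]; exact hx)]
      norm_num
  | succ K ih =>
    have hsplit : prob A s (K + 1) (fun p => hitsAt x (K + 1) p)
        + prob A s (K + 1) (fun p => ∀ m, m ≤ K + 1 → (p m).1 ≠ x)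
        = prob A s (K + 1) (fun p => ∀ m, m ≤ K → (p m).1 ≠ x) := by
      rw [prob_eq, prob_eq, prob_eq, ← Summable.tsum_add
        (summable_ind A hA hsum hsub s (K + 1) (fun p => hitsAt x (K + 1) p))
        (summable_ind A hA hsum hsub s (K + 1) (fun p => ∀ m, m ≤ K + 1 → (p m).1 ≠ x))]
      refine tsum_congr fun l => ?_
      rw [← add_mul]
      congr 1
      set p := pos s l.1
      by_cases h1 : ∀ m, m ≤ K → (p m).1 ≠ x
      · by_cases h2 : (p (K + 1)).1 = x
        · rw [ind_true ⟨h2, fun r hr => h1 r (by omega)⟩, ind_true h1,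
            ind_false (fun hc => (hc (K + 1) le_rfl) h2)]
          norm_num
        · rw [ind_false (fun hc => h2 hc.1), ind_true h1,
            ind_true (fun m hm => by rcases Nat.lt_succ_iff_lt_or_eq.mp (Nat.lt_succ_of_le hm) with h | h
                                     · exact h1 m (by omega)
                                     · rw [h]; exact h2)]
          norm_num
      · push_neg at h1
        obtain ⟨m0, hm0, hx0⟩ := h1
        rw [ind_false (fun hc => hc.2 m0 (by omega) hx0),
          ind_false (fun hc => (hc m0 (by omega)) hx0),
          ind_false (fun hc => (hc m0 hm0) hx0)]
        norm_num
    have hle : prob A s (K + 1) (fun p => ∀ m, m ≤ K → (p m).1 ≠ x)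
        ≤ prob A s K (fun p => ∀ m, m ≤ K → (p m).1 ≠ x) := by
      refine prob_succ_le A hA hsum hsub s K _ ?_
      intro p q hpq hp m hm
      rw [← hpq m hm]; exact hp m hm
    calc (∑ n ∈ Finset.range (K + 2), prob A s n (fun p => hitsAt x n p))
          + prob A s (K + 1) (fun p => ∀ m, m ≤ K + 1 → (p m).1 ≠ x)
        = (∑ n ∈ Finset.range (K + 1), prob A s n (fun p => hitsAt x n p))
          + (prob A s (K + 1) (fun p => hitsAt x (K + 1) p)
             + prob A s (K + 1) (fun p => ∀ m, m ≤ K + 1 → (p m).1 ≠ x)) := by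
          rw [Finset.sum_range_succ]; ring
      _ = (∑ n ∈ Finset.range (K + 1), prob A s n (fun p => hitsAt x n p))
          + prob A s (K + 1) (fun p => ∀ m, m ≤ K → (p m).1 ≠ x) := by rw [hsplit]
      _ ≤ (∑ n ∈ Finset.range (K + 1), prob A s n (fun p => hitsAt x n p))
          + prob A s K (fun p => ∀ m, m ≤ K → (p m).1 ≠ x) := by linarith
      _ ≤ 1 := ih

end Decomp



section Final

variable {N : ℕ} (A : ℤ → Matrix (Fin N) (Fin N) ℝ)

lemma prob_hit_level (x : ℤ) (m j : Fin N) (r : ℕ) :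
    prob A ((x, m) : S N) r (fun p => p r = (x, j))
      = prob A (((0 : ℤ), m) : S N) r (fun p => p r = ((0 : ℤ), j)) := by
  have h := prob_shift A x (((0 : ℤ), m) : S N) r (fun p => p r = (x, j))
  rw [show shiftPt x (((0 : ℤ), m) : S N) = ((x, m) : S N) by unfold shiftPt; simp] at h
  rw [h]
  refine prob_congr A _ r _ _ fun p => ?_
  show shiftPt x (p r) = (x, j) ↔ p r = ((0 : ℤ), j)
  unfold shiftPt
  rw [Prod.ext_iff, Prod.ext_iff]
  constructor
  · rintro ⟨h1, h2⟩; exact ⟨by dsimp at h1 ⊢; omega, h2⟩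
  · rintro ⟨h1, h2⟩; exact ⟨by dsimp at h1 ⊢; omega, h2⟩


end Final

/-- v-discounted version: L̃_v(x,∞) = 𝔼(v^{τ^{x}}; J_{τ^{x}}) · L̃_v. -/
theorem statement4 {N : ℕ} (hN : 0 < N) (A : ℤ → Matrix (Fin N) (Fin N) ℝ)
    (hA : ∀ m i j, 0 ≤ A m i j)
    (hskip : ∀ m : ℤ, 2 ≤ m → A m = 0)
    (hsum : ∀ i, Summable fun q : ℤ × Fin N => A q.1 i q.2)
    (hsub : ∀ i, ∑' q : ℤ × Fin N, A q.1 i q.2 ≤ 1)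
    (v : ℝ) (hv0 : 0 < v) (hv1 : v ≤ 1)
    (hLv : ∀ i j : Fin N,
      Summable fun k : ℕ => v ^ k * prob A ((0 : ℤ), i) k fun p => p k = ((0 : ℤ), j)) :
    ∀ x : ℤ, occMat A v x = hitMat A v x * occMat A v 0 := by
  intro x
  ext i j
  rw [Matrix.mul_apply]
  set a : Fin N → ℕ → ℝ := fun m n =>
    v ^ n * prob A ((0 : ℤ), i) n (fun p => hitsAt x n p ∧ (p n).2 = m) with ha_def
  set b : Fin N → ℕ → ℝ := fun m r =>
    v ^ r * prob A ((0 : ℤ), m) r (fun p => p r = ((0 : ℤ), j)) with hb_def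
  have ha_nonneg : ∀ m n, 0 ≤ a m n := fun m n =>
    mul_nonneg (pow_nonneg hv0.le n) (prob_nonneg A _ _ _ hA)
  have hb_nonneg : ∀ m r, 0 ≤ b m r := fun m r =>
    mul_nonneg (pow_nonneg hv0.le r) (prob_nonneg A _ _ _ hA)
  have hb_sum : ∀ m, Summable (b m) := fun m => hLv m j
  have ha_sum : ∀ m, Summable (a m) := by
    intro m
    refine summable_of_sum_le (c := 1) (fun n => ha_nonneg m n) ?_
    intro u
    set K := u.sup id with hK
    have husub : u ⊆ Finset.range (K + 1) := fun n hn =>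
      Finset.mem_range.mpr (Nat.lt_succ_of_le (Finset.le_sup (f := id) hn))
    have hterm : ∀ n, a m n ≤ prob A ((0 : ℤ), i) n (fun p => hitsAt x n p) := by
      intro n
      calc a m n ≤ 1 * prob A ((0 : ℤ), i) n (fun p => hitsAt x n p ∧ (p n).2 = m) :=
            mul_le_mul_of_nonneg_right (pow_le_one₀ hv0.le hv1) (prob_nonneg A _ _ _ hA)
        _ = prob A ((0 : ℤ), i) n (fun p => hitsAt x n p ∧ (p n).2 = m) := one_mul _
        _ ≤ prob A ((0 : ℤ), i) n (fun p => hitsAt x n p) :=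
            prob_mono A hA hsum hsub _ _ _ _ (fun p hp => hp.1)
    calc ∑ n ∈ u, a m n ≤ ∑ n ∈ Finset.range (K + 1), a m n :=
          Finset.sum_le_sum_of_subset_of_nonneg husub (fun n _ _ => ha_nonneg m n)
      _ ≤ ∑ n ∈ Finset.range (K + 1), prob A ((0 : ℤ), i) n (fun p => hitsAt x n p) :=
          Finset.sum_le_sum fun n _ => hterm n
      _ ≤ 1 := by
          have h1 := hit_partial_le_one A hA hsum hsub x ((0 : ℤ), i) K
          have h2 := prob_nonneg A ((0 : ℤ), i) K
            (fun p => ∀ m', m' ≤ K → (p m').1 ≠ x) hA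
          linarith
  have hk : ∀ k : ℕ, v ^ k * prob A ((0 : ℤ), i) k (fun p => p k = (x, j))
      = ∑ m : Fin N, ∑ n ∈ Finset.range (k + 1), a m n * b m (k - n) := by
    intro k
    calc v ^ k * prob A ((0 : ℤ), i) k (fun p => p k = (x, j))
        = ∑ n ∈ Finset.range (k + 1),
            v ^ k * prob A ((0 : ℤ), i) k (fun p => p k = (x, j) ∧ hitsAt x n p) := by
          rw [prob_decomp A hA hsum hsub ((0 : ℤ), i) x j k, Finset.mul_sum]
      _ = ∑ n ∈ Finset.range (k + 1), ∑ m : Fin N, a m n * b m (k - n) := by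
          refine Finset.sum_congr rfl fun n hn => ?_
          have hnk : n ≤ k := by
            have := Finset.mem_range.mp hn; omega
          rw [prob_split_first A hA hsum hsub x j k n hnk ((0 : ℤ), i), Finset.mul_sum]
          refine Finset.sum_congr rfl fun m _ => ?_
          rw [prob_hit_level A x m j (k - n)]
          rw [show v ^ k = v ^ n * v ^ (k - n) by rw [← pow_add]; congr 1; omega]
          show v ^ n * v ^ (k - n) * (prob _ _ _ _ * prob _ _ _ _) = _
          rw [ha_def, hb_def]
          ring
      _ = ∑ m : Fin N, ∑ n ∈ Finset.range (k + 1), a m n * b m (k - n) := Finset.sum_comm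
  have hnorm_a : ∀ m, Summable fun n => ‖a m n‖ := by
    intro m
    have : (fun n => ‖a m n‖) = a m :=
      funext fun n => by rw [Real.norm_eq_abs, abs_of_nonneg (ha_nonneg m n)]
    rw [this]; exact ha_sum m
  have hnorm_b : ∀ m, Summable fun r => ‖b m r‖ := by
    intro m
    have : (fun r => ‖b m r‖) = b m :=
      funext fun r => by rw [Real.norm_eq_abs, abs_of_nonneg (hb_nonneg m r)]
    rw [this]; exact hb_sum m
  calc occMat A v x i j
      = ∑' k : ℕ, v ^ k * prob A ((0 : ℤ), i) k (fun p => p k = (x, j)) := rfl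
    _ = ∑' k : ℕ, ∑ m : Fin N, ∑ n ∈ Finset.range (k + 1), a m n * b m (k - n) :=
        tsum_congr hk
    _ = ∑ m : Fin N, ∑' k : ℕ, ∑ n ∈ Finset.range (k + 1), a m n * b m (k - n) := by
        refine Summable.tsum_finsetSum fun m _ => ?_
        exact (summable_norm_sum_mul_range_of_summable_norm (hnorm_a m) (hnorm_b m)).of_norm
    _ = ∑ m : Fin N, (∑' n, a m n) * (∑' r, b m r) := by
        refine Finset.sum_congr rfl fun m _ => ?_
        exact (tsum_mul_tsum_eq_tsum_sum_range_of_summable_norm (hnorm_a m) (hnorm_b m)).symm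
    _ = ∑ m : Fin N, hitMat A v x i m * occMat A v 0 m j := rfl


end MACPaper

end
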